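/- Let A ∈ ℂ^{N×N} and let AV_m = V_m H_m + h_{m+1,m} v_{m+1} e_m^T be an Arnoldi decomposition with V_m having orthonormal columns, v_{m+1} a unit vector orthogonal to the columns of V_m, and H_m upper Hessenberg. For v = β V_m e_1 (β = ‖v‖), define w(t) = e^{−tA}v and w_m(t) = β V_m e^{−tH_m} e_1. Then the error E_m(t) = w(t) − w_m(t) satisfies E_m(τ) = −β h_{m+1,m} ∫_0^τ (e_m^T e^{−tH_m} e_1) e^{(t−τ)A} v_{m+1} dt. -/

import Mathlib

open Matrix intervalIntegral

open NormedSpace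

attribute [local instance] Matrix.linftyOpNormedAddCommGroup Matrix.linftyOpNormedRing
  Matrix.linftyOpNormedAlgebra

theorem real_smul_mulVec {n m : ℕ} (r : ℝ) (M : Matrix (Fin n) (Fin m) ℂ) (x : Fin m → ℂ) :
    (r • M).mulVec x = r • M.mulVec x := by
  rw [← algebraMap_smul ℂ r M, Matrix.smul_mulVec, algebraMap_smul]

noncomputable def mulVecConstCLM {n m : ℕ} (c : Fin m → ℂ) :
    Matrix (Fin n) (Fin m) ℂ →L[ℝ] (Fin n → ℂ) :=
  LinearMap.toContinuousLinearMap
  { toFun := fun X => X.mulVec c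
    map_add' := fun X Y => Matrix.add_mulVec X Y c
    map_smul' := fun r X => by
      show ((algebraMap ℝ ℂ) r • X).mulVec c = r • X.mulVec c
      rw [algebraMap_smul, real_smul_mulVec] }

@[simp] theorem mulVecConstCLM_apply {n m : ℕ} (c : Fin m → ℂ)
    (X : Matrix (Fin n) (Fin m) ℂ) : mulVecConstCLM c X = X.mulVec c := rfl

noncomputable def constMulVecCLM {n m : ℕ} (W : Matrix (Fin n) (Fin m) ℂ) :
    (Fin m → ℂ) →L[ℝ] (Fin n → ℂ) :=
  LinearMap.toContinuousLinearMap ((Matrix.mulVecLin W).restrictScalars ℝ)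

@[simp] theorem constMulVecCLM_apply {n m : ℕ} (W : Matrix (Fin n) (Fin m) ℂ)
    (y : Fin m → ℂ) : constMulVecCLM W y = W.mulVec y := rfl

noncomputable def mulVecB (n : ℕ) :
    Matrix (Fin n) (Fin n) ℂ →L[ℝ] (Fin n → ℂ) →L[ℝ] (Fin n → ℂ) :=
  LinearMap.toContinuousLinearMap
  { toFun := fun M => constMulVecCLM M
    map_add' := fun M M' => by
      ext x; simp [Matrix.add_mulVec]
    map_smul' := fun r M => by
      ext x
      simp only [constMulVecCLM_apply, RingHom.id_apply, ContinuousLinearMap.coe_smul',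
        Pi.smul_apply, real_smul_mulVec] }

@[simp] theorem mulVecB_apply {n : ℕ} (M : Matrix (Fin n) (Fin n) ℂ) (x : Fin n → ℂ) :
    mulVecB n M x = M.mulVec x := rfl

theorem hasDerivAt_comp_ofReal {E : Type*} [NormedAddCommGroup E] [NormedSpace ℂ E]
    {e : ℂ → E} {e' : E} {z : ℝ} (hf : HasDerivAt e e' z) :
    HasDerivAt (fun t : ℝ => e t) e' z := by
  simpa [Function.comp_def] using (hf.hasFDerivAt.restrictScalars ℝ).comp_hasDerivAt z Complex.ofRealCLM.hasDerivAt

/-- integral representation of the error of the Arnoldi approximation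
to `e^{−τA} v`:  with `A V = V H + h v_{m+1} e_mᵀ` an Arnoldi decomposition
(`m = k+1`), `v = β V e_1`, `w(t) = e^{−tA}v`, `w_m(t) = β V e^{−tH} e_1`, one has
`w(τ) − w_m(τ) = −β h ∫_0^τ (e_mᵀ e^{−tH} e_1) e^{(t−τ)A} v_{m+1} dt`. -/
theorem arnoldi_exp_error_integral {N k : ℕ}
    (A : Matrix (Fin N) (Fin N) ℂ)
    (V : Matrix (Fin N) (Fin (k + 1)) ℂ)
    (H : Matrix (Fin (k + 1)) (Fin (k + 1)) ℂ)
    (h : ℂ) (vnext : Fin N → ℂ)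
    (horth : Vᴴ * V = 1)
    (hvnext_unit : star vnext ⬝ᵥ vnext = 1)
    (hvnext_orth : Vᴴ.mulVec vnext = 0)
    (hHess : ∀ i j : Fin (k + 1), (j : ℕ) + 1 < (i : ℕ) → H i j = 0)
    (hArnoldi : A * V = V * H + h • Matrix.vecMulVec vnext (Pi.single (Fin.last k) 1))
    (β : ℝ) (hβ : 0 ≤ β) (v : Fin N → ℂ)
    (hv : v = (β : ℂ) • V.mulVec (Pi.single 0 1))
    (τ : ℝ) :
    (NormedSpace.exp (-(τ : ℂ) • A)).mulVec v
        - (β : ℂ) • V.mulVec ((NormedSpace.exp (-(τ : ℂ) • H)).mulVec (Pi.single 0 1))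
      = (-((β : ℂ) * h)) •
          ∫ t in (0 : ℝ)..τ,
            (((NormedSpace.exp (-(t : ℂ) • H)).mulVec (Pi.single 0 1)) (Fin.last k)) •
              (NormedSpace.exp (((t : ℂ) - (τ : ℂ)) • A)).mulVec vnext := by
  set e1 : Fin (k + 1) → ℂ := Pi.single 0 1 with he1
  set Mt : ℝ → Matrix (Fin N) (Fin N) ℂ := fun t => exp (((t : ℂ) - (τ : ℂ)) • A) with hMt
  set Et : ℝ → Matrix (Fin (k + 1)) (Fin (k + 1)) ℂ := fun t => exp (-((t : ℂ) • H)) with hEt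
  set xt : ℝ → (Fin (k + 1) → ℂ) := fun t => (Et t).mulVec e1 with hxt
  set ut : ℝ → (Fin N → ℂ) := fun t => (β : ℂ) • V.mulVec (xt t) with hut
  set G : ℝ → (Fin N → ℂ) := fun t => (Mt t).mulVec (ut t) with hG
  set g : ℝ → (Fin N → ℂ) :=
    fun t => ((β : ℂ) * h) • ((xt t (Fin.last k)) • (Mt t).mulVec vnext) with hg
  -- derivative of Mt
  have hMd : ∀ t : ℝ, HasDerivAt Mt (A * Mt t) t := by
    intro t
    have h1 : HasDerivAt (fun u : ℂ => exp ((u - (τ : ℂ)) • A))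
        (A * exp (((t : ℂ) - (τ : ℂ)) • A)) (t : ℝ) := by
      have hg1 := hasDerivAt_exp_smul_const' (𝕂 := ℂ) A ((t : ℂ) - (τ : ℂ))
      have hf1 : HasDerivAt (fun w : ℂ => w - (τ : ℂ)) 1 (t : ℂ) :=
        (hasDerivAt_id _).sub_const _
      have h2 := hg1.scomp (t : ℂ) hf1
      simp only [Function.comp_def, one_smul] at h2
      exact h2
    exact hasDerivAt_comp_ofReal h1
  -- derivative of Et
  have hEd : ∀ t : ℝ, HasDerivAt Et (-(H * Et t)) t := by
    intro t
    have h1 := hasDerivAt_exp_smul_const' (𝕂 := ℂ) (-H) (t : ℂ)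
    simp only [smul_neg, neg_mul] at h1
    exact hasDerivAt_comp_ofReal h1
  -- derivative of ut
  have hud : ∀ t : ℝ,
      HasDerivAt ut ((β : ℂ) • V.mulVec ((-(H * Et t)).mulVec e1)) t := by
    intro t
    have hx : HasDerivAt xt ((-(H * Et t)).mulVec e1) t := by
      exact
        (mulVecConstCLM (n := k + 1) e1).hasFDerivAt.comp_hasDerivAt t (hEd t)
    have hVx : HasDerivAt (fun t => V.mulVec (xt t))
        (V.mulVec ((-(H * Et t)).mulVec e1)) t := by
      simpa [Function.comp_def] using (constMulVecCLM V).hasFDerivAt.comp_hasDerivAt t hx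
    exact hVx.const_smul ((β : ℂ))
  -- the vecMulVec computation
  have hvmv : ∀ x : Fin (k + 1) → ℂ,
      (Matrix.vecMulVec vnext (Pi.single (Fin.last k) 1)).mulVec x
        = x (Fin.last k) • vnext := by
    intro x
    funext i
    simp [Matrix.vecMulVec_apply, Matrix.mulVec, dotProduct, Pi.single_apply,
      ite_mul, mul_ite, mul_comm, mul_assoc]
  -- the key algebraic identity
  have key : ∀ t : ℝ,
      A.mulVec (ut t) + (β : ℂ) • V.mulVec ((-(H * Et t)).mulVec e1)
        = ((β : ℂ) * h) • ((xt t (Fin.last k)) • vnext) := by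
    intro t
    have h1 : A.mulVec (ut t)
        = (β : ℂ) • ((V * H).mulVec (xt t)) + (β : ℂ) • (h • (xt t (Fin.last k) • vnext)) := by
      rw [hut]
      simp only
      rw [Matrix.mulVec_smul, Matrix.mulVec_mulVec, hArnoldi, Matrix.add_mulVec,
        Matrix.smul_mulVec, hvmv, smul_add]
    have h2 : (β : ℂ) • V.mulVec ((-(H * Et t)).mulVec e1)
        = -((β : ℂ) • (V * H).mulVec (xt t)) := by
      rw [Matrix.neg_mulVec, Matrix.mulVec_neg, smul_neg, ← Matrix.mulVec_mulVec,
        ← Matrix.mulVec_mulVec]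
    rw [h1, h2, smul_smul]
    abel
  -- derivative of G
  have hGd : ∀ t : ℝ, HasDerivAt G (g t) t := by
    intro t
    have hc : HasDerivAt (fun t => mulVecB N (Mt t)) (mulVecB N (A * Mt t)) t :=
      (mulVecB N).hasFDerivAt.comp_hasDerivAt t (hMd t)
    have hGd' := hc.clm_apply (hud t)
    simp only [mulVecB_apply] at hGd'
    have hcomm : A * Mt t = Mt t * A :=
      (((Commute.refl A).smul_right ((t : ℂ) - (τ : ℂ))).exp_right).eq
    have heq : (A * Mt t).mulVec (ut t)
          + (Mt t).mulVec ((β : ℂ) • V.mulVec ((-(H * Et t)).mulVec e1)) = g t := by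
      rw [hcomm, ← Matrix.mulVec_mulVec, ← Matrix.mulVec_add, key, hg]
      simp only
      rw [Matrix.mulVec_smul, Matrix.mulVec_smul]
    rw [← heq]
    exact hGd'
  -- continuity of g
  have hgc : Continuous g := by
    have hMc : Continuous Mt := by
      apply NormedSpace.exp_continuous.comp
      exact ((Complex.continuous_ofReal.sub continuous_const).smul continuous_const)
    have hEc : Continuous Et := by
      apply NormedSpace.exp_continuous.comp
      exact (Complex.continuous_ofReal.smul continuous_const).neg
    have hxc : Continuous fun t => xt t (Fin.last k) := by
      have : Continuous xt := ((mulVecConstCLM (n := k + 1) e1).continuous).comp hEc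
      exact (continuous_apply (Fin.last k)).comp this
    have hMv : Continuous fun t => (Mt t).mulVec vnext :=
      ((mulVecConstCLM (n := N) vnext).continuous).comp hMc
    exact Continuous.smul (f := fun _ : ℝ => ((β : ℂ) * h)) continuous_const (hxc.smul hMv)
  -- FTC
  have hFTC : ∫ t in (0 : ℝ)..τ, g t = G τ - G 0 :=
    intervalIntegral.integral_eq_sub_of_hasDerivAt (fun t _ => hGd t)
      (hgc.intervalIntegrable 0 τ)
  -- endpoint values
  have hG0 : G 0 = (exp (-((τ : ℂ) • A))).mulVec v := by
    simp only [hG, hMt, hut, hxt, hEt, hv, Complex.ofReal_zero, zero_smul, neg_zero,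
      NormedSpace.exp_zero, Matrix.one_mulVec, zero_sub, neg_smul]
  have hGτ : G τ = (β : ℂ) • V.mulVec ((exp (-((τ : ℂ) • H))).mulVec e1) := by
    simp only [hG, hMt, hut, hxt, hEt, sub_self, zero_smul, NormedSpace.exp_zero,
      Matrix.one_mulVec]
  -- final assembly
  simp only [neg_smul]
  have h5 : ((β : ℂ) * h) • (∫ t in (0 : ℝ)..τ, (xt t (Fin.last k)) • (Mt t).mulVec vnext)
      = G τ - G 0 := by
    rw [← intervalIntegral.integral_smul]; exact hFTC
  rw [← hG0, ← hGτ, ← neg_sub (G τ) (G 0), ← h5]
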